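/- Let V be a real inner product space, let b₁, b₂, b₃ ∈ V be ℝ-linearly independent, and let (b₁, b₂*, b₃*) denote the Gram–Schmidt orthogonalization of (b₁, b₂, b₃). Then there exist integers m and n such that the vector b₃' = b₃ − m·b₂ − n·b₁ satisfies ‖b₃'‖² ≤ ‖b₃*‖² + (1/4)·(‖b₁‖² + ‖b₂*‖²); moreover the ℤ-span of {b₁, b₂, b₃'} equals the ℤ-span of {b₁, b₂, b₃}. -/

import Mathlib

open scoped RealInnerProductSpace

instance : WellFoundedLT (Fin 3) := inferInstance

/-- Size-reduction of the third basis vector: for linearly independent `b₀, b₁, b₂` in a real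
inner product space with Gram–Schmidt orthogonalization `(b₀, b₁*, b₂*)`, there are integers
`m, n` such that `b₂' = b₂ - m·b₁ - n·b₀` satisfies
`‖b₂'‖² ≤ ‖b₂*‖² + (1/4)·(‖b₀‖² + ‖b₁*‖²)`, and `{b₀, b₁, b₂'}` spans the same `ℤ`-lattice
as `{b₀, b₁, b₂}`. -/
theorem stmt_7 {V : Type*} [NormedAddCommGroup V] [InnerProductSpace ℝ V]
    (b : Fin 3 → V) (hind : LinearIndependent ℝ b) :
    ∃ m n : ℤ,
      ‖b 2 - m • b 1 - n • b 0‖ ^ 2 ≤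
        ‖InnerProductSpace.gramSchmidt ℝ (ι := Fin 3) b 2‖ ^ 2 +
          1 / 4 * (‖b 0‖ ^ 2 + ‖InnerProductSpace.gramSchmidt ℝ (ι := Fin 3) b 1‖ ^ 2) ∧
      Submodule.span ℤ ({b 0, b 1, b 2 - m • b 1 - n • b 0} : Set V) =
        Submodule.span ℤ ({b 0, b 1, b 2} : Set V) := by
  set g : Fin 3 → V := InnerProductSpace.gramSchmidt ℝ b with hgdef
  have hg0 : g 0 = b 0 := InnerProductSpace.gramSchmidt_bot ℝ b
  set α : ℝ := inner ℝ (g 1) (b 2) / (‖g 1‖ : ℝ) ^ 2 with hα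
  set β : ℝ := inner ℝ (g 0) (b 2) / (‖g 0‖ : ℝ) ^ 2 with hβ
  set γ : ℝ := inner ℝ (g 0) (b 1) / (‖g 0‖ : ℝ) ^ 2 with hγ
  have h2 : b 2 = g 2 + (β • g 0 + α • g 1) := by
    have := InnerProductSpace.gramSchmidt_def'' ℝ b 2
    rwa [show (Finset.Iio (2 : Fin 3)) = {0, 1} from by decide,
      Finset.sum_insert (by decide), Finset.sum_singleton] at this
  have h1 : b 1 = g 1 + γ • g 0 := by
    have := InnerProductSpace.gramSchmidt_def'' ℝ b 1
    rwa [show (Finset.Iio (1 : Fin 3)) = {0} from by decide,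
      Finset.sum_singleton] at this
  set m : ℤ := round α with hm
  set n : ℤ := round (β - m * γ) with hn
  refine ⟨m, n, ?_, ?_⟩
  · have key : b 2 - m • b 1 - n • b 0 =
        g 2 + ((α - m) • g 1 + (β - m * γ - n) • g 0) := by
      rw [← Int.cast_smul_eq_zsmul ℝ m (b 1), ← Int.cast_smul_eq_zsmul ℝ n (b 0), ← hg0]
      rw [h2, h1]
      module
    have o10 : (inner ℝ (g 1) (g 0) : ℝ) = 0 := InnerProductSpace.gramSchmidt_orthogonal ℝ b (by decide)
    have o02 : (inner ℝ (g 2) (g 0) : ℝ) = 0 := InnerProductSpace.gramSchmidt_orthogonal ℝ b (by decide)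
    have o12 : (inner ℝ (g 2) (g 1) : ℝ) = 0 := InnerProductSpace.gramSchmidt_orthogonal ℝ b (by decide)
    have hnorm : ‖b 2 - m • b 1 - n • b 0‖ ^ 2 =
        ‖g 2‖ ^ 2 + ((α - m) ^ 2 * ‖g 1‖ ^ 2 + (β - m * γ - n) ^ 2 * ‖g 0‖ ^ 2) := by
      rw [key, norm_add_sq_real, norm_add_sq_real]
      rw [inner_add_right, inner_smul_right, inner_smul_right, o02, o12,
        inner_smul_left, inner_smul_right, o10]
      simp [norm_smul, mul_pow]
    have hs : (α - (m : ℝ)) ^ 2 ≤ 1 / 4 := by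
      have h := abs_sub_round α
      nlinarith [sq_abs (α - (m : ℝ)), abs_nonneg (α - (m : ℝ))]
    have ht : (β - m * γ - (n : ℝ)) ^ 2 ≤ 1 / 4 := by
      have h := abs_sub_round (β - m * γ)
      nlinarith [sq_abs (β - m * γ - (n : ℝ)), abs_nonneg (β - m * γ - (n : ℝ))]
    rw [hnorm, ← hg0]
    nlinarith [sq_nonneg ‖g 1‖, sq_nonneg ‖g 0‖, sq_nonneg (‖g 1‖ * (α - m)),
      sq_nonneg (‖g 0‖ * (β - m * γ - n))]
  · apply le_antisymm
    · rw [Submodule.span_le]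
      intro x hx
      have hb0 : b 0 ∈ Submodule.span ℤ ({b 0, b 1, b 2} : Set V) :=
        Submodule.subset_span (by simp)
      have hb1 : b 1 ∈ Submodule.span ℤ ({b 0, b 1, b 2} : Set V) :=
        Submodule.subset_span (by simp)
      have hb2 : b 2 ∈ Submodule.span ℤ ({b 0, b 1, b 2} : Set V) :=
        Submodule.subset_span (by simp)
      rcases hx with h | h | h <;> subst h
      · exact hb0
      · exact hb1
      · exact sub_mem (sub_mem hb2 (Submodule.smul_mem _ m hb1)) (Submodule.smul_mem _ n hb0)
    · rw [Submodule.span_le]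
      intro x hx
      have hb0 : b 0 ∈ Submodule.span ℤ ({b 0, b 1, b 2 - m • b 1 - n • b 0} : Set V) :=
        Submodule.subset_span (by simp)
      have hb1 : b 1 ∈ Submodule.span ℤ ({b 0, b 1, b 2 - m • b 1 - n • b 0} : Set V) :=
        Submodule.subset_span (by simp)
      have hb2' : b 2 - m • b 1 - n • b 0 ∈
          Submodule.span ℤ ({b 0, b 1, b 2 - m • b 1 - n • b 0} : Set V) :=
        Submodule.subset_span (by simp)
      rcases hx with h | h | h <;> subst h
      · exact hb0
      · exact hb1
      · have := add_mem (add_mem hb2' (Submodule.smul_mem _ m hb1)) (Submodule.smul_mem _ n hb0)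
        have heq : b 2 - m • b 1 - n • b 0 + m • b 1 + n • b 0 = b 2 := by abel
        rwa [heq] at this
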